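/- arXiv:1301.2831 — 2 statements merged into one kernel-verified Lean document; each statement's English description precedes it below -/
import Mathlib

section
/- Let U and V be closed subspaces of H with cos(θ_{U,V⊥}) > 0, and let W = W_{UV} : H₀ → U be the oblique projection with range U and kernel V, where H₀ = U ⊕ V. Then for all f ∈ H₀, ‖f − Q_U f‖ ≤ ‖f − W f‖ ≤ sec(θ_{U,V⊥}) ‖f − Q_U f‖, where Q_U is the orthogonal projection onto U. -/
open Submodule
open scoped ComplexInnerProductSpace

variable {H : Type*}

/-- The cosine of the subspace angle `θ_{U,W}` between subspaces `U` and `W`: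
`cos θ_{U,W} = inf_{u ∈ U, ‖u‖ = 1} ‖Q_W u‖`. -/
noncomputable def cosAngle [NormedAddCommGroup H] [InnerProductSpace ℂ H]
    (U W : Submodule ℂ H) [HasOrthogonalProjection W] : ℝ :=
  sInf {r : ℝ | ∃ u ∈ U, ‖u‖ = 1 ∧ r = ‖(orthogonalProjection W u : H)‖}

lemma cosAngle_le [NormedAddCommGroup H] [InnerProductSpace ℂ H]
    (U W : Submodule ℂ H) [HasOrthogonalProjection W]
    (u : H) (huU : u ∈ U) (hu1 : ‖u‖ = 1) :
    cosAngle U W ≤ ‖(orthogonalProjection W u : H)‖ := by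
  apply csInf_le
  · exact ⟨0, fun r ⟨x, _, _, hr⟩ => hr ▸ norm_nonneg _⟩
  · exact ⟨u, huU, hu1, rfl⟩

lemma key_lemma [NormedAddCommGroup H] [InnerProductSpace ℂ H] [CompleteSpace H]
    (U V : Submodule ℂ H) (hV : IsClosed (V : Set H))
    [HasOrthogonalProjection U] [HasOrthogonalProjection Vᗮ]
    (hangle : 0 < cosAngle U Vᗮ) (v : H) (hv : v ∈ V) :
    cosAngle U Vᗮ * ‖v‖ ≤ ‖v - (orthogonalProjection U v : H)‖ := by
  haveI : CompleteSpace V := hV.completeSpace_coe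
  set c := cosAngle U Vᗮ with hc
  set q : H := (orthogonalProjection U v : H) with hqdef
  have hqU : q ∈ U := (orthogonalProjection U v).2
  have hvq : v - q ∈ Uᗮ := U.sub_starProjection_mem_orthogonal v
  have hinner : ⟪q, v - q⟫ = 0 := hvq q hqU
  have pyth : ‖v‖ * ‖v‖ = ‖q‖ * ‖q‖ + ‖v - q‖ * ‖v - q‖ := by
    have := norm_add_sq_eq_norm_sq_add_norm_sq_of_inner_eq_zero q (v - q) hinner
    simpa using this
  -- c ≤ 1
  have hS : {r : ℝ | ∃ u ∈ U, ‖u‖ = 1 ∧ r = ‖(orthogonalProjection Vᗮ u : H)‖}.Nonempty := by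
    by_contra h
    rw [Set.not_nonempty_iff_eq_empty] at h
    rw [hc, cosAngle, h, Real.sInf_empty] at hangle
    exact lt_irrefl 0 hangle
  have hc1 : c ≤ 1 := by
    obtain ⟨r, u', hu'U, hu'1, hr⟩ := hS
    have h1 : c ≤ r := by rw [hr]; exact cosAngle_le U Vᗮ u' hu'U hu'1
    have h2 : r ≤ 1 := by
      rw [hr]
      calc ‖(orthogonalProjection Vᗮ u' : H)‖ ≤ ‖orthogonalProjection Vᗮ‖ * ‖u'‖ :=
            (orthogonalProjection Vᗮ).le_opNorm u'
        _ ≤ 1 * 1 := by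
            apply mul_le_mul (orthogonalProjection_norm_le Vᗮ) (le_of_eq hu'1)
              (norm_nonneg _) zero_le_one
        _ = 1 := one_mul 1
    linarith
  by_cases hq0 : q = 0
  · rw [hq0, sub_zero]
    nlinarith [norm_nonneg v]
  · set w : H := (orthogonalProjection Vᗮ q : H) with hwdef
    have hwmem : w ∈ Vᗮ := (orthogonalProjection Vᗮ q).2
    set p : H := q - w with hpdef
    have hpmem : p ∈ V := by
      have : q - w ∈ Vᗮᗮ := Vᗮ.sub_starProjection_mem_orthogonal q
      rwa [Submodule.orthogonal_orthogonal] at this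
    have hpw : ⟪p, w⟫ = 0 := hwmem p hpmem
    have hq_split : q = p + w := by rw [hpdef]; abel
    have hq_norm : ‖q‖ * ‖q‖ = ‖p‖ * ‖p‖ + ‖w‖ * ‖w‖ := by
      rw [hq_split]; exact norm_add_sq_eq_norm_sq_add_norm_sq_of_inner_eq_zero p w hpw
    -- ⟪q, v⟫ = ‖q‖²
    have hqv : ⟪q, v⟫ = (‖q‖ : ℂ) ^ 2 := by
      have : ⟪q, v⟫ - ⟪q, q⟫ = 0 := by rw [← inner_sub_right]; exact hinner
      have h2 : ⟪q, v⟫ = ⟪q, q⟫ := by linear_combination this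
      rw [h2, inner_self_eq_norm_sq_to_K]
      norm_cast
    have hwv : ⟪w, v⟫ = 0 := by
      have := hwmem v hv
      rw [← inner_conj_symm]; simp [this]
    have hpv : ⟪p, v⟫ = (‖q‖ : ℂ) ^ 2 := by
      have : ⟪p, v⟫ + ⟪w, v⟫ = ⟪q, v⟫ := by rw [← inner_add_left, ← hq_split]
      rw [hwv, add_zero] at this
      rw [this, hqv]
    have hCS : ‖q‖ ^ 2 ≤ ‖p‖ * ‖v‖ := by
      have h1 : ‖⟪p, v⟫‖ ≤ ‖p‖ * ‖v‖ := norm_inner_le_norm p v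
      rw [hpv] at h1
      simpa [pow_two] using h1
    -- c * ‖q‖ ≤ ‖w‖
    have hqpos : (0 : ℝ) < ‖q‖ := norm_pos_iff.mpr hq0
    have hcw : c * ‖q‖ ≤ ‖w‖ := by
      set u' : H := (‖q‖⁻¹ : ℂ) • q with hu'def
      have hu'U : u' ∈ U := U.smul_mem _ hqU
      have hu'1 : ‖u'‖ = 1 := by
        rw [hu'def, norm_smul]
        simp [hqpos.ne']
      have h1 : c ≤ ‖(orthogonalProjection Vᗮ u' : H)‖ := cosAngle_le U Vᗮ u' hu'U hu'1
      have h2 : (orthogonalProjection Vᗮ u' : H) = (‖q‖⁻¹ : ℂ) • w := by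
        rw [hu'def, map_smul]; rfl
      rw [h2, norm_smul] at h1
      have : c ≤ ‖q‖⁻¹ * ‖w‖ := by simpa using h1
      calc c * ‖q‖ ≤ (‖q‖⁻¹ * ‖w‖) * ‖q‖ := by nlinarith
        _ = ‖w‖ := by field_simp
    -- ‖q‖² ≤ (1 - c²) ‖v‖²
    have hp_sq : ‖p‖ ^ 2 ≤ (1 - c ^ 2) * ‖q‖ ^ 2 := by
      nlinarith [mul_le_mul hcw hcw (by positivity) (norm_nonneg w)]
    have hq_le : ‖q‖ ^ 2 ≤ (1 - c ^ 2) * ‖v‖ ^ 2 := by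
      have h4 : ‖q‖ ^ 2 * ‖q‖ ^ 2 ≤ (‖p‖ * ‖v‖) * (‖p‖ * ‖v‖) :=
        mul_le_mul hCS hCS (by positivity) (by positivity)
      have h5 : ‖p‖ ^ 2 * ‖v‖ ^ 2 ≤ ((1 - c ^ 2) * ‖q‖ ^ 2) * ‖v‖ ^ 2 :=
        mul_le_mul_of_nonneg_right hp_sq (sq_nonneg _)
      have h6 : ‖q‖ ^ 2 * ‖q‖ ^ 2 ≤ ((1 - c ^ 2) * ‖v‖ ^ 2) * ‖q‖ ^ 2 := by nlinarith
      exact le_of_mul_le_mul_right h6 (by positivity)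
    have hfinal_sq : (c * ‖v‖) ^ 2 ≤ ‖v - q‖ ^ 2 := by nlinarith
    have h0 : 0 ≤ c * ‖v‖ := mul_nonneg hangle.le (norm_nonneg v)
    nlinarith [norm_nonneg (v - q)]

/-- with `cos θ_{U,Vᗮ} > 0` and `W` the oblique projection with range `U` and
kernel `V` defined on `H₀ = U ⊕ V`, every `f = u + v ∈ H₀` (with `u ∈ U`, `v ∈ V`, so `W f = u`)
satisfies `‖f - Q_U f‖ ≤ ‖f - W f‖ ≤ sec θ_{U,Vᗮ} ‖f - Q_U f‖`. -/
theorem stmt2 [NormedAddCommGroup H] [InnerProductSpace ℂ H] [CompleteSpace H]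
    (U V : Submodule ℂ H) (hU : IsClosed (U : Set H)) (hV : IsClosed (V : Set H))
    [HasOrthogonalProjection U] [HasOrthogonalProjection Vᗮ]
    (hUV : U ⊓ V = ⊥)
    (hangle : 0 < cosAngle U Vᗮ)
    (f u v : H) (hu : u ∈ U) (hv : v ∈ V) (hf : f = u + v) :
    ‖f - (orthogonalProjection U f : H)‖ ≤ ‖f - u‖ ∧
      ‖f - u‖ ≤ (cosAngle U Vᗮ)⁻¹ * ‖f - (orthogonalProjection U f : H)‖ := by
  have hfu : f - u = v := by rw [hf]; abel
  set q : H := (orthogonalProjection U v : H) with hqdef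
  have hQf : (orthogonalProjection U f : H) = u + q := by
    rw [hf, map_add]
    push_cast
    congr 1
    exact U.starProjection_eq_self_iff.mpr hu
  have hfq : f - (orthogonalProjection U f : H) = v - q := by
    rw [hQf, hf]; abel
  have hqU : q ∈ U := (orthogonalProjection U v).2
  have hvq : v - q ∈ Uᗮ := U.sub_starProjection_mem_orthogonal v
  have hinner : ⟪q, v - q⟫ = 0 := hvq q hqU
  have pyth : ‖v‖ * ‖v‖ = ‖q‖ * ‖q‖ + ‖v - q‖ * ‖v - q‖ := by
    have := norm_add_sq_eq_norm_sq_add_norm_sq_of_inner_eq_zero q (v - q) hinner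
    simpa using this
  constructor
  · rw [hfq, hfu]
    nlinarith [norm_nonneg q, norm_nonneg v, norm_nonneg (v - q)]
  · rw [hfq, hfu]
    have := key_lemma U V hV hangle v hv
    rw [← hqdef] at this
    exact (le_inv_mul_iff₀ hangle).mpr this
end

section
/- Let F_{n,m} : H → T_n be the generalized sampling map (the oblique projection onto T_n along (P_m(T_n))⊥, assuming cos(θ_{n,m})>0). Then its condition number κ(F_{n,m}) := sup_{f∈H, f̂^{[m]}≠0} ‖F_{n,m}(f)‖ / ‖f̂^{[m]}‖_{ℓ²} equals D_{n,m} = (inf_{φ∈T_n,‖φ‖=1}⟨P_mφ,φ⟩)^{-1/2}, where f̂^{[m]} = (⟨f,ψ_j⟩)_{j=1}^m. -/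
open Submodule
open scoped InnerProductSpace

variable {H : Type*}

/-- The truncated frame operator `P_m g = Σ_{j=1}^m ⟨g,ψ_j⟩ψ_j`. -/
noncomputable def framePm [NormedAddCommGroup H] [InnerProductSpace ℂ H] {m : ℕ}
    (ψ : Fin m → H) : H →L[ℂ] H :=
  ∑ j, ((innerSL ℂ (ψ j)).smulRight (ψ j))

/-- The generalized sampling constant
`D_{n,m} = (inf_{φ ∈ T_n, ‖φ‖=1} ⟨P_m φ, φ⟩)^{-1/2}`, using
`⟨P_m φ, φ⟩ = Σ_{j=1}^m |⟨φ,ψ_j⟩|²`. -/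
noncomputable def Dconst [NormedAddCommGroup H] [InnerProductSpace ℂ H] {m : ℕ}
    (ψ : Fin m → H) (T : Submodule ℂ H) : ℝ :=
  (Real.sqrt (sInf {r : ℝ | ∃ φ ∈ T, ‖φ‖ = 1 ∧ r = ∑ j, ‖⟪ψ j, φ⟫_ℂ‖ ^ 2}))⁻¹

section Aux
variable [NormedAddCommGroup H] [InnerProductSpace ℂ H] {m : ℕ}

noncomputable def Smap (ψ : Fin m → H) (f : H) : EuclideanSpace ℂ (Fin m) :=
  WithLp.toLp 2 (fun j => ⟪ψ j, f⟫_ℂ)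

lemma inner_framePm (ψ : Fin m → H) (f g : H) :
    ⟪framePm ψ f, g⟫_ℂ = ⟪Smap ψ f, Smap ψ g⟫_ℂ := by
  simp [framePm, Smap, ContinuousLinearMap.sum_apply, sum_inner, inner_smul_left,
    PiLp.inner_apply, RCLike.inner_apply]

lemma Smap_sub (ψ : Fin m → H) (f g : H) :
    Smap ψ (f - g) = Smap ψ f - Smap ψ g := by
  ext j
  simp [Smap, inner_sub_right]

lemma Smap_norm_sq (ψ : Fin m → H) (f : H) :
    (∑ j, ‖⟪ψ j, f⟫_ℂ‖ ^ 2) = ‖Smap ψ f‖ ^ 2 := by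
  rw [EuclideanSpace.norm_eq, Real.sq_sqrt (by positivity)]
  rfl

end Aux

/-- the condition number of generalized sampling
`κ(F_{n,m}) = sup_{f, f̂^{[m]} ≠ 0} ‖F_{n,m}(f)‖/‖f̂^{[m]}‖_{ℓ²}` equals
`D_{n,m} = (inf_{φ∈T_n,‖φ‖=1}⟨P_mφ,φ⟩)^{-1/2}`. -/
theorem stmt11 [NormedAddCommGroup H] [InnerProductSpace ℂ H] [CompleteSpace H]
    {m : ℕ} (ψ : Fin m → H) (T : Submodule ℂ H) [FiniteDimensional ℂ T]
    (hD : 0 < sInf {r : ℝ | ∃ φ ∈ T, ‖φ‖ = 1 ∧ r = ∑ j, ‖⟪ψ j, φ⟫_ℂ‖ ^ 2})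
    (F : H → H)
    (hF : ∀ f : H, F f ∈ T ∧
      ∀ φ ∈ T, ⟪framePm ψ (F f), φ⟫_ℂ = ⟪framePm ψ f, φ⟫_ℂ) :
    IsLUB {r : ℝ | ∃ f : H, (∑ j, ‖⟪ψ j, f⟫_ℂ‖ ^ 2) ≠ 0 ∧
      r = ‖F f‖ / Real.sqrt (∑ j, ‖⟪ψ j, f⟫_ℂ‖ ^ 2)} (Dconst ψ T) := by
  classical
  set cset : Set ℝ := {r : ℝ | ∃ φ ∈ T, ‖φ‖ = 1 ∧ r = ∑ j, ‖⟪ψ j, φ⟫_ℂ‖ ^ 2} with hcset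
  have hne : cset.Nonempty := by
    by_contra h
    rw [Set.not_nonempty_iff_eq_empty] at h
    rw [h, Real.sInf_empty] at hD
    exact lt_irrefl 0 hD
  have hbdd : BddBelow cset := by
    refine ⟨0, ?_⟩
    rintro r ⟨φ, -, -, hr⟩
    rw [hr]; positivity
  have hcle : ∀ r ∈ cset, sInf cset ≤ r := fun r hr => csInf_le hbdd hr
  -- key inequality : c * ‖u‖² ≤ ‖S u‖² for u ∈ T
  have hkey : ∀ u ∈ T, sInf cset * ‖u‖ ^ 2 ≤ ‖Smap ψ u‖ ^ 2 := by
    intro u hu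
    rcases eq_or_ne u 0 with rfl | hu0
    · simp
    · have hnu : (0 : ℝ) < ‖u‖ := norm_pos_iff.mpr hu0
      set φ : H := ((‖u‖ : ℂ))⁻¹ • u with hφdef
      have hφT : φ ∈ T := T.smul_mem _ hu
      have hφ1 : ‖φ‖ = 1 := by
        rw [hφdef, norm_smul, norm_inv, Complex.norm_real, Real.norm_of_nonneg hnu.le,
          inv_mul_cancel₀ hnu.ne']
      have hQ : (∑ j, ‖⟪ψ j, φ⟫_ℂ‖ ^ 2) = (‖u‖ ^ 2)⁻¹ * ‖Smap ψ u‖ ^ 2 := by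
        rw [← Smap_norm_sq]
        have : ∀ j, ‖⟪ψ j, φ⟫_ℂ‖ ^ 2 = (‖u‖ ^ 2)⁻¹ * ‖⟪ψ j, u⟫_ℂ‖ ^ 2 := by
          intro j
          rw [hφdef, inner_smul_right, norm_mul, norm_inv, Complex.norm_real,
            Real.norm_of_nonneg hnu.le, mul_pow, inv_pow]
        rw [Finset.sum_congr rfl (fun j _ => this j), ← Finset.mul_sum]
      have hmem : (∑ j, ‖⟪ψ j, φ⟫_ℂ‖ ^ 2) ∈ cset := ⟨φ, hφT, hφ1, rfl⟩
      have h1 := hcle _ hmem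
      rw [hQ] at h1
      have h2 := mul_le_mul_of_nonneg_right h1 (le_of_lt (by positivity : (0:ℝ) < ‖u‖ ^ 2))
      calc sInf cset * ‖u‖ ^ 2 ≤ (‖u‖ ^ 2)⁻¹ * ‖Smap ψ u‖ ^ 2 * ‖u‖ ^ 2 := h2
        _ = ‖Smap ψ u‖ ^ 2 := by field_simp
  have hSinj : ∀ u ∈ T, Smap ψ u = 0 → u = 0 := by
    intro u hu h0
    have h1 := hkey u hu
    rw [h0, norm_zero] at h1
    by_contra hne0
    have hnu : (0:ℝ) < ‖u‖ := norm_pos_iff.mpr hne0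
    have : (0:ℝ) < ‖u‖ ^ 2 := by positivity
    nlinarith [mul_pos hD this]
  have hFfix : ∀ φ ∈ T, F φ = φ := by
    intro φ hφ
    obtain ⟨hmem, heq⟩ := hF φ
    have hsub : Smap ψ (F φ - φ) = 0 := by
      have h1 := heq (F φ - φ) (T.sub_mem hmem hφ)
      rw [inner_framePm, inner_framePm] at h1
      have h2 : ⟪Smap ψ (F φ) - Smap ψ φ, Smap ψ (F φ - φ)⟫_ℂ = 0 := by
        rw [inner_sub_left, h1, sub_self]
      rw [← Smap_sub] at h2
      exact inner_self_eq_zero.mp h2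
    exact sub_eq_zero.mp (hSinj _ (T.sub_mem hmem hφ) hsub)
  have hs : (0:ℝ) < Real.sqrt (sInf cset) := Real.sqrt_pos.mpr hD
  have hDconst : Dconst ψ T = (Real.sqrt (sInf cset))⁻¹ := rfl
  constructor
  · -- upper bound
    rintro r ⟨f, hQf, hr⟩
    obtain ⟨hmem, heq⟩ := hF f
    have hQfS : (∑ j, ‖⟪ψ j, f⟫_ℂ‖ ^ 2) = ‖Smap ψ f‖ ^ 2 := Smap_norm_sq ψ f
    have hSf : (0:ℝ) < ‖Smap ψ f‖ := by
      rcases (norm_nonneg (Smap ψ f)).lt_or_eq with h | h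
      · exact h
      · exfalso; apply hQf; rw [hQfS, ← h]; ring
    -- ‖S(Ff)‖ ≤ ‖S f‖
    have h1 : ⟪Smap ψ (F f), Smap ψ (F f)⟫_ℂ = ⟪Smap ψ f, Smap ψ (F f)⟫_ℂ := by
      have := heq (F f) hmem
      rwa [inner_framePm, inner_framePm] at this
    have h2 : ‖Smap ψ (F f)‖ ≤ ‖Smap ψ f‖ := by
      rcases eq_or_ne (Smap ψ (F f)) 0 with h0 | h0
      · simp [h0, norm_nonneg]
      · have hpos : (0:ℝ) < ‖Smap ψ (F f)‖ := norm_pos_iff.mpr h0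
        have e1 : ‖Smap ψ (F f)‖ ^ 2 = RCLike.re ⟪Smap ψ (F f), Smap ψ (F f)⟫_ℂ := by
          rw [← @inner_self_eq_norm_sq ℂ]
        have e2 : RCLike.re ⟪Smap ψ f, Smap ψ (F f)⟫_ℂ ≤ ‖Smap ψ f‖ * ‖Smap ψ (F f)‖ :=
          le_trans (RCLike.re_le_norm _) (norm_inner_le_norm _ _)
        have e3 : ‖Smap ψ (F f)‖ ^ 2 ≤ ‖Smap ψ f‖ * ‖Smap ψ (F f)‖ := by
          rw [e1, h1]; exact e2
        nlinarith
    have h3 : sInf cset * ‖F f‖ ^ 2 ≤ ‖Smap ψ f‖ ^ 2 :=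
      le_trans (hkey _ hmem) (pow_le_pow_left₀ (norm_nonneg _) h2 2)
    -- conclude
    have h4 : Real.sqrt (sInf cset) * ‖F f‖ ≤ ‖Smap ψ f‖ := by
      have hsq : (Real.sqrt (sInf cset) * ‖F f‖) ^ 2 ≤ ‖Smap ψ f‖ ^ 2 := by
        rw [mul_pow, Real.sq_sqrt hD.le]; exact h3
      nlinarith [mul_nonneg hs.le (norm_nonneg (F f)), norm_nonneg (Smap ψ f)]
    rw [hr, hDconst, hQfS, Real.sqrt_sq (norm_nonneg _), div_le_iff₀ hSf]
    have h5 := mul_le_mul_of_nonneg_left h4 (inv_nonneg.mpr hs.le)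
    rw [← mul_assoc, inv_mul_cancel₀ hs.ne', one_mul] at h5
    exact h5
  · -- least upper bound
    intro b hb
    have hrb : ∀ r ∈ cset, (Real.sqrt r)⁻¹ ≤ b := by
      rintro r ⟨φ, hφT, hφ1, hrE⟩
      have hrpos : (0:ℝ) < r := lt_of_lt_of_le hD (hcle r ⟨φ, hφT, hφ1, hrE⟩)
      apply hb
      refine ⟨φ, by rw [← hrE]; exact hrpos.ne', ?_⟩
      rw [hFfix φ hφT, hφ1, ← hrE, one_div]
    have hbpos : (0:ℝ) < b := by
      obtain ⟨r0, hr0⟩ := hne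
      have hr0pos : (0:ℝ) < r0 := lt_of_lt_of_le hD (hcle r0 hr0)
      exact lt_of_lt_of_le (inv_pos.mpr (Real.sqrt_pos.mpr hr0pos)) (hrb r0 hr0)
    have hlb : (b⁻¹) ^ 2 ≤ sInf cset := by
      apply le_csInf hne
      intro r hr
      have hrpos : (0:ℝ) < r := lt_of_lt_of_le hD (hcle r hr)
      have hsr : (0:ℝ) < Real.sqrt r := Real.sqrt_pos.mpr hrpos
      have h5 : b⁻¹ ≤ Real.sqrt r := by
        rw [inv_le_comm₀ hbpos hsr] at *
        exact hrb r hr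
      calc (b⁻¹) ^ 2 ≤ (Real.sqrt r) ^ 2 := pow_le_pow_left₀ (inv_nonneg.mpr hbpos.le) h5 2
        _ = r := Real.sq_sqrt hrpos.le
    have h6 : b⁻¹ ≤ Real.sqrt (sInf cset) := by
      calc b⁻¹ = Real.sqrt ((b⁻¹) ^ 2) := (Real.sqrt_sq (inv_nonneg.mpr hbpos.le)).symm
        _ ≤ Real.sqrt (sInf cset) := Real.sqrt_le_sqrt hlb
    rw [hDconst]
    calc (Real.sqrt (sInf cset))⁻¹ ≤ (b⁻¹)⁻¹ :=
          inv_anti₀ (inv_pos.mpr hbpos) h6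
      _ = b := inv_inv b
end
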